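/- Let 0 < λ < 1, η > 0, and t₀ > 2η. For any m ∈ ℕ, any sequence c : ℕ → ℝ with |c i| < η for all i, and any t ∈ [0, t₀], the quantity P(t) = λ^t + λ^(t₀ - t) + ∑_{j=1}^{m} λ^(t + j·t₀ + ∑_{i=1}^{j} c i) is bounded above by 2 + λ^(t₀/2)/(1 - λ^(t₀/2)). -/

import Mathlib

theorem stmt_0 (lam η t₀ : ℝ) (hlam0 : 0 < lam) (hlam1 : lam < 1)
    (hη : 0 < η) (ht₀ : t₀ > 2 * η) (m : ℕ) (c : ℕ → ℝ) (hc : ∀ i, |c i| < η)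
    (t : ℝ) (ht : t ∈ Set.Icc 0 t₀) :
    lam ^ t + lam ^ (t₀ - t) +
      ∑ j ∈ Finset.Icc 1 m, lam ^ (t + (j : ℝ) * t₀ + ∑ i ∈ Finset.Icc 1 j, c i)
    ≤ 2 + lam ^ (t₀ / 2) / (1 - lam ^ (t₀ / 2)) := by
  obtain ⟨ht0, ht1⟩ := ht
  have ht₀pos : 0 < t₀ := lt_trans (by linarith) ht₀
  set r : ℝ := lam ^ (t₀ / 2) with hr
  have hr0 : 0 < r := Real.rpow_pos_of_pos hlam0 _
  have hr1 : r < 1 := Real.rpow_lt_one hlam0.le hlam1 (by linarith)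
  have h1 : lam ^ t ≤ 1 := Real.rpow_le_one hlam0.le hlam1.le ht0
  have h2 : lam ^ (t₀ - t) ≤ 1 := Real.rpow_le_one hlam0.le hlam1.le (by linarith)
  have hterm : ∀ j ∈ Finset.Icc 1 m,
      lam ^ (t + (j : ℝ) * t₀ + ∑ i ∈ Finset.Icc 1 j, c i) ≤ r ^ j := by
    intro j _
    have hS : -((j : ℝ) * η) ≤ ∑ i ∈ Finset.Icc 1 j, c i := by
      have : ∑ i ∈ Finset.Icc 1 j, (-η) ≤ ∑ i ∈ Finset.Icc 1 j, c i := by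
        apply Finset.sum_le_sum
        intro i _
        have := abs_lt.mp (hc i)
        linarith [this.1]
      simpa [Nat.card_Icc, mul_comm] using this
    have hexp : (j : ℝ) * (t₀ / 2) ≤ t + (j : ℝ) * t₀ + ∑ i ∈ Finset.Icc 1 j, c i := by
      have hj : (0 : ℝ) ≤ (j : ℝ) := Nat.cast_nonneg j
      nlinarith
    calc lam ^ (t + (j : ℝ) * t₀ + ∑ i ∈ Finset.Icc 1 j, c i)
        ≤ lam ^ ((j : ℝ) * (t₀ / 2)) :=
          Real.rpow_le_rpow_of_exponent_ge hlam0 hlam1.le hexp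
      _ = r ^ j := by
          rw [mul_comm, Real.rpow_mul hlam0.le, Real.rpow_natCast]
  have hsum : ∑ j ∈ Finset.Icc 1 m, r ^ j ≤ r / (1 - r) := by
    have hEq : ∑ j ∈ Finset.Icc 1 m, r ^ j = r * ∑ j ∈ Finset.range m, r ^ j := by
      rw [← Finset.Ico_add_one_right_eq_Icc, Finset.sum_Ico_eq_sum_range, Finset.mul_sum]
      simp [pow_succ, pow_add, mul_comm]
    have hgeom : ∑ j ∈ Finset.range m, r ^ j ≤ (1 - r)⁻¹ := by
      have h := Summable.sum_le_tsum (Finset.range m) (fun i _ => pow_nonneg hr0.le i)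
        (summable_geometric_of_lt_one hr0.le hr1)
      rwa [tsum_geometric_of_lt_one hr0.le hr1] at h
    rw [hEq, div_eq_mul_inv]
    exact mul_le_mul_of_nonneg_left hgeom hr0.le
  have := Finset.sum_le_sum hterm
  linarith
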